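/- In the quantum Hamilton algebra QHa(N), the elements Ĵ_ij (defined as J_ij(T²+RL−AM) + T(G_iQ_j−G_jQ_i) + T(F_iP_j−F_jP_i) + L(G_iF_j−G_jF_i) + R(P_iQ_j−P_jQ_i) + M(Q_iF_j−Q_jF_i) + A(P_iG_j−P_jG_i)) satisfy [Ĵ_ij, J_kl] = δ_il Ĵ_jk + δ_jk Ĵ_il − δ_jl Ĵ_ik − δ_ik Ĵ_jl, i.e. they transform like the so(N) generators. -/

import Mathlib

open UniversalEnvelopingAlgebra

/-- Kronecker delta with values in a field `k`. -/
def kdelta (k : Type*) [Field k] {N : ℕ} (a b : Fin N) : k := if a = b then 1 else 0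


private lemma kdelta_comm (k : Type*) [Field k] {N : ℕ} (a b : Fin N) :
    kdelta k a b = kdelta k b a := by
  simp [kdelta, eq_comm]

private lemma ring_mul_lie {A : Type*} [Ring A] (a b c : A) :
    ⁅a * b, c⁆ = a * ⁅b, c⁆ + ⁅a, c⁆ * b := by
  simp only [Ring.lie_def]; noncomm_ring

/-- In `QHa(N)`, the elements `Ĵ_ij` transform like the `so(N)` generators:
`⁅Ĵ_ij, ι(J_kl)⁆ = δ_il Ĵ_jk + δ_jk Ĵ_il − δ_jl Ĵ_ik − δ_ik Ĵ_jl`. -/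
theorem QHa_virtual_copy_transforms_like_soN
    (k : Type*) [Field k] (g : Type*) [LieRing g] [LieAlgebra k g] (N : ℕ)
    (J : Fin N → Fin N → g) (G F Q P : Fin N → g) (R E T L A M : g)
    (hJa : ∀ i j, J i j = -J j i)
    (hJJ : ∀ i j l m, ⁅J i j, J l m⁆ =
      kdelta k i m • J j l + kdelta k j l • J i m - kdelta k j m • J i l - kdelta k i l • J j m)
    (hJG : ∀ i j l, ⁅J i j, G l⁆ = -(kdelta k i l • G j) + kdelta k j l • G i)
    (hJF : ∀ i j l, ⁅J i j, F l⁆ = -(kdelta k i l • F j) + kdelta k j l • F i)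
    (hJQ : ∀ i j l, ⁅J i j, Q l⁆ = -(kdelta k i l • Q j) + kdelta k j l • Q i)
    (hJP : ∀ i j l, ⁅J i j, P l⁆ = -(kdelta k i l • P j) + kdelta k j l • P i)
    (hGF : ∀ i j, ⁅G i, F j⁆ = kdelta k i j • R)
    (hGQ : ∀ i j, ⁅G i, Q j⁆ = kdelta k i j • T)
    (hFP : ∀ i j, ⁅F i, P j⁆ = kdelta k i j • T)
    (hPQ : ∀ i j, ⁅P i, Q j⁆ = kdelta k i j • L)
    (hGP : ∀ i j, ⁅G i, P j⁆ = kdelta k i j • M)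
    (hFQ : ∀ i j, ⁅F i, Q j⁆ = kdelta k i j • A)
    (hEG : ∀ i, ⁅E, G i⁆ = -P i) (hEF : ∀ i, ⁅E, F i⁆ = Q i)
    (hET : ⁅E, T⁆ = -L) (hER : ⁅E, R⁆ = (2 : k) • T)
    (hLc : ∀ x : g, ⁅x, L⁆ = 0) (hAc : ∀ x : g, ⁅x, A⁆ = 0) (hMc : ∀ x : g, ⁅x, M⁆ = 0)
    (hGG : ∀ i j, ⁅G i, G j⁆ = 0) (hFF : ∀ i j, ⁅F i, F j⁆ = 0)
    (hQQ : ∀ i j, ⁅Q i, Q j⁆ = 0) (hPP : ∀ i j, ⁅P i, P j⁆ = 0)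
    (hJR : ∀ i j, ⁅J i j, R⁆ = 0) (hJE : ∀ i j, ⁅J i j, E⁆ = 0)
    (hJT : ∀ i j, ⁅J i j, T⁆ = 0)
    (hGR : ∀ i, ⁅G i, R⁆ = 0) (hFR : ∀ i, ⁅F i, R⁆ = 0)
    (hQR : ∀ i, ⁅Q i, R⁆ = 0) (hPR : ∀ i, ⁅P i, R⁆ = 0)
    (hGT : ∀ i, ⁅G i, T⁆ = 0) (hFT : ∀ i, ⁅F i, T⁆ = 0)
    (hQT : ∀ i, ⁅Q i, T⁆ = 0) (hPT : ∀ i, ⁅P i, T⁆ = 0)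
    (hRT : ⁅R, T⁆ = 0)
    (hEQ : ∀ i, ⁅E, Q i⁆ = 0) (hEP : ∀ i, ⁅E, P i⁆ = 0)
 :
    ∀ i j l m,
      ⁅(fun a b => (ι k (J a b) : UniversalEnvelopingAlgebra k g)
        * (ι k T ^ 2 + ι k R * ι k L - ι k A * ι k M)
      + ι k T * (ι k (G a) * ι k (Q b) - ι k (G b) * ι k (Q a))
      + ι k T * (ι k (F a) * ι k (P b) - ι k (F b) * ι k (P a))
      + ι k L * (ι k (G a) * ι k (F b) - ι k (G b) * ι k (F a))
      + ι k R * (ι k (P a) * ι k (Q b) - ι k (P b) * ι k (Q a))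
      + ι k M * (ι k (Q a) * ι k (F b) - ι k (Q b) * ι k (F a))
      + ι k A * (ι k (P a) * ι k (G b) - ι k (P b) * ι k (G a))) i j, ι k (J l m)⁆
        = kdelta k i m • ((fun a b => (ι k (J a b) : UniversalEnvelopingAlgebra k g)
        * (ι k T ^ 2 + ι k R * ι k L - ι k A * ι k M)
      + ι k T * (ι k (G a) * ι k (Q b) - ι k (G b) * ι k (Q a))
      + ι k T * (ι k (F a) * ι k (P b) - ι k (F b) * ι k (P a))
      + ι k L * (ι k (G a) * ι k (F b) - ι k (G b) * ι k (F a))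
      + ι k R * (ι k (P a) * ι k (Q b) - ι k (P b) * ι k (Q a))
      + ι k M * (ι k (Q a) * ι k (F b) - ι k (Q b) * ι k (F a))
      + ι k A * (ι k (P a) * ι k (G b) - ι k (P b) * ι k (G a))) j l)
          + kdelta k j l • ((fun a b => (ι k (J a b) : UniversalEnvelopingAlgebra k g)
        * (ι k T ^ 2 + ι k R * ι k L - ι k A * ι k M)
      + ι k T * (ι k (G a) * ι k (Q b) - ι k (G b) * ι k (Q a))
      + ι k T * (ι k (F a) * ι k (P b) - ι k (F b) * ι k (P a))
      + ι k L * (ι k (G a) * ι k (F b) - ι k (G b) * ι k (F a))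
      + ι k R * (ι k (P a) * ι k (Q b) - ι k (P b) * ι k (Q a))
      + ι k M * (ι k (Q a) * ι k (F b) - ι k (Q b) * ι k (F a))
      + ι k A * (ι k (P a) * ι k (G b) - ι k (P b) * ι k (G a))) i m)
          - kdelta k j m • ((fun a b => (ι k (J a b) : UniversalEnvelopingAlgebra k g)
        * (ι k T ^ 2 + ι k R * ι k L - ι k A * ι k M)
      + ι k T * (ι k (G a) * ι k (Q b) - ι k (G b) * ι k (Q a))
      + ι k T * (ι k (F a) * ι k (P b) - ι k (F b) * ι k (P a))
      + ι k L * (ι k (G a) * ι k (F b) - ι k (G b) * ι k (F a))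
      + ι k R * (ι k (P a) * ι k (Q b) - ι k (P b) * ι k (Q a))
      + ι k M * (ι k (Q a) * ι k (F b) - ι k (Q b) * ι k (F a))
      + ι k A * (ι k (P a) * ι k (G b) - ι k (P b) * ι k (G a))) i l)
          - kdelta k i l • ((fun a b => (ι k (J a b) : UniversalEnvelopingAlgebra k g)
        * (ι k T ^ 2 + ι k R * ι k L - ι k A * ι k M)
      + ι k T * (ι k (G a) * ι k (Q b) - ι k (G b) * ι k (Q a))
      + ι k T * (ι k (F a) * ι k (P b) - ι k (F b) * ι k (P a))
      + ι k L * (ι k (G a) * ι k (F b) - ι k (G b) * ι k (F a))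
      + ι k R * (ι k (P a) * ι k (Q b) - ι k (P b) * ι k (Q a))
      + ι k M * (ι k (Q a) * ι k (F b) - ι k (Q b) * ι k (F a))
      + ι k A * (ι k (P a) * ι k (G b) - ι k (P b) * ι k (G a))) j m) := by
  intro i j l m
  have hTJ : ⁅T, J l m⁆ = 0 := by rw [← lie_skew, hJT, neg_zero]
  have hRJ : ⁅R, J l m⁆ = 0 := by rw [← lie_skew, hJR, neg_zero]
  have hLJ : ⁅L, J l m⁆ = 0 := by rw [← lie_skew, hLc, neg_zero]
  have hAJ : ⁅A, J l m⁆ = 0 := by rw [← lie_skew, hAc, neg_zero]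
  have hMJ : ⁅M, J l m⁆ = 0 := by rw [← lie_skew, hMc, neg_zero]
  have hGJ : ∀ a, ⁅G a, J l m⁆ = kdelta k a l • G m - kdelta k a m • G l := by
    intro a
    rw [← lie_skew, hJG, kdelta_comm k l a, kdelta_comm k m a]
    abel
  have hFJ : ∀ a, ⁅F a, J l m⁆ = kdelta k a l • F m - kdelta k a m • F l := by
    intro a
    rw [← lie_skew, hJF, kdelta_comm k l a, kdelta_comm k m a]
    abel
  have hQJ : ∀ a, ⁅Q a, J l m⁆ = kdelta k a l • Q m - kdelta k a m • Q l := by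
    intro a
    rw [← lie_skew, hJQ, kdelta_comm k l a, kdelta_comm k m a]
    abel
  have hPJ : ∀ a, ⁅P a, J l m⁆ = kdelta k a l • P m - kdelta k a m • P l := by
    intro a
    rw [← lie_skew, hJP, kdelta_comm k l a, kdelta_comm k m a]
    abel
  have hi : ∀ x y : g, ⁅(ι k x : UniversalEnvelopingAlgebra k g), ι k y⁆ = ι k ⁅x, y⁆ :=
    fun x y => by
      letI : LieRing (UniversalEnvelopingAlgebra k g) := LieRing.ofAssociativeRing
      letI : LieAlgebra k (UniversalEnvelopingAlgebra k g) := LieAlgebra.ofAssociativeAlgebra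
      exact ((ι k).map_lie x y).symm
  letI : LieRing (UniversalEnvelopingAlgebra k g) := LieRing.ofAssociativeRing
  letI : LieAlgebra k (UniversalEnvelopingAlgebra k g) := LieAlgebra.ofAssociativeAlgebra
  simp only [pow_two, add_lie, sub_lie, ring_mul_lie, hi, hJJ, hGJ, hFJ, hQJ, hPJ,
    hTJ, hRJ, hLJ, hAJ, hMJ, map_add, map_sub, map_smul, map_zero, map_neg,
    zero_mul, mul_zero, add_zero, zero_add, smul_mul_assoc, mul_smul_comm,
    mul_add, mul_sub, add_mul, sub_mul, smul_add, smul_sub, mul_assoc]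
  module
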